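/- Suppose w[i..j] is a maximal abelian power of period P (norm p): w[i..j] is a concatenation of at least two blocks of length p, all with Parikh vector P, and it satisfies (i < p or P_{w[i-p..i-1]} ≠ P) and (j + p ≥ |w| or P_{w[j+1..j+p]} ≠ P). Then there is a unique anchored run with period P whose core sequence is exactly w[i..j]; conversely, trimming the head and tail of any anchored run with period P yields a maximal abelian power of period P. This correspondence is a bijection. -/

import Mathlib

open scoped BigOperators

variable {α : Type*} [DecidableEq α] [Fintype α]

/-- Parikh vector of a word: counts of each letter. -/
def parikh (w : List α) (a : α) : ℕ := w.count a

/-- Componentwise containment of Parikh vectors. -/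
def PSub (P Q : α → ℕ) : Prop := ∀ a, P a ≤ Q a

/-- Strict containment of Parikh vectors. -/
def PSSub (P Q : α → ℕ) : Prop := PSub P Q ∧ P ≠ Q

/-- Norm of a Parikh vector: sum of its components. -/
def pnorm (P : α → ℕ) : ℕ := ∑ a, P a

/-- Fragment w[i..j] (both endpoints included). -/
def frag (w : List α) (i j : ℕ) : List α := (w.drop i).take (j + 1 - i)

/-- `IsPF P w k u` : w = u 0 ++ u 1 ++ ⋯ ++ u k is a periodic factorization of w
with respect to P: the cores u 1, …, u (k-1) have Parikh vector P and the head u 0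
and tail u k have Parikh vector strictly contained in P. -/
def IsPF (P : α → ℕ) (w : List α) (k : ℕ) (u : ℕ → List α) : Prop :=
  1 ≤ k ∧ w = ((List.range (k + 1)).map u).flatten ∧
  (∀ i, 0 < i → i < k → parikh (u i) = P) ∧
  PSSub (parikh (u 0)) P ∧ PSSub (parikh (u k)) P

/-- Fragment w[i..j] has abelian period P. -/
def HasPeriod (P : α → ℕ) (w : List α) (i j : ℕ) : Prop :=
  ∃ m u, IsPF P (frag w i j) m u

/-- Fragment w[i..j] has abelian period P anchored at k : there is a periodic
factorization whose cores start (within w) at positions ≡ k (mod |P|). -/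
def HasAnchPeriod (P : α → ℕ) (w : List α) (i j k : ℕ) : Prop :=
  ∃ m u, IsPF P (frag w i j) m u ∧ (i + (u 0).length) % pnorm P = k % pnorm P

/-- Fragment w[i..j] is periodic with period P anchored at k
(factorization with at least two cores). -/
def PeriodicAnch (P : α → ℕ) (w : List α) (i j k : ℕ) : Prop :=
  ∃ m u, 3 ≤ m ∧ IsPF P (frag w i j) m u ∧
    (i + (u 0).length) % pnorm P = k % pnorm P

/-- Fragment w[i..j] is periodic with period P (at least two cores, any anchor). -/
def APeriodic (P : α → ℕ) (w : List α) (i j : ℕ) : Prop :=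
  ∃ m u, 3 ≤ m ∧ IsPF P (frag w i j) m u

/-- k-anchored abelian run with period P. -/
def AnchoredRun (P : α → ℕ) (w : List α) (i j k : ℕ) : Prop :=
  i ≤ j ∧ j < w.length ∧ PeriodicAnch P w i j k ∧
  (i = 0 ∨ ¬ PeriodicAnch P w (i - 1) j k) ∧
  (j + 1 = w.length ∨ ¬ PeriodicAnch P w i (j + 1) k)

/-- Abelian run with period P. -/
def AbelianRun (P : α → ℕ) (w : List α) (i j : ℕ) : Prop :=
  i ≤ j ∧ j < w.length ∧ APeriodic P w i j ∧
  (i = 0 ∨ ¬ APeriodic P w (i - 1) j) ∧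
  (j + 1 = w.length ∨ ¬ APeriodic P w i (j + 1))

/-- B_i[k]: the starting position of the longest suffix of w[0..i] having abelian
period P anchored at k (⊤ = ∞ if no such suffix exists). -/
noncomputable def Bfun (P : α → ℕ) (w : List α) (i k : ℕ) : ℕ∞ :=
  sInf {b : ℕ∞ | ∃ s : ℕ, b = (s : ℕ∞) ∧ s ≤ i + 1 ∧ HasAnchPeriod P w s i k}

/-- w[i..j] is a maximal abelian power of period P: a concatenation of at least
two blocks of length p = |P|, each with Parikh vector P, which cannot be
extended by a full block on either side. -/
def MaxPower (P : α → ℕ) (w : List α) (i j : ℕ) : Prop :=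
  j < w.length ∧
  (∃ m, 2 ≤ m ∧ j + 1 = i + m * pnorm P) ∧
  (∀ l, i + (l + 1) * pnorm P ≤ j + 1 →
    parikh (frag w (i + l * pnorm P) (i + (l + 1) * pnorm P - 1)) = P) ∧
  (i < pnorm P ∨ parikh (frag w (i - pnorm P) (i - 1)) ≠ P) ∧
  (w.length ≤ j + pnorm P ∨ parikh (frag w (j + 1) (j + pnorm P)) ≠ P)

section Helpers

variable {P : α → ℕ} {w : List α}

/-- block of length n starting at s -/
def blk (w : List α) (s n : ℕ) : List α := (w.drop s).take n

lemma frag_eq_blk (w : List α) (i j : ℕ) : frag w i j = blk w i (j + 1 - i) := rfl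

lemma blk_length (w : List α) (s n : ℕ) : (blk w s n).length = min n (w.length - s) := by
  simp [blk]

lemma blk_append (w : List α) (x a b : ℕ) :
    blk w x a ++ blk w (x + a) b = blk w x (a + b) := by
  simp only [blk, ← List.drop_drop]
  exact List.take_add.symm

lemma blk_zero (w : List α) (x : ℕ) : blk w x 0 = [] := rfl

lemma pnorm_parikh (v : List α) : pnorm (parikh v) = v.length := by
  induction v with
  | nil => simp [pnorm, parikh]
  | cons a t ih =>
    simp only [pnorm, parikh, List.count_cons] at *
    rw [Finset.sum_add_distrib, ih]
    simp [List.length_cons]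

lemma length_of_parikh_eq {v : List α} (h : parikh v = P) : v.length = pnorm P := by
  rw [← pnorm_parikh v, h]

lemma length_lt_of_pssub {v : List α} (h : PSSub (parikh v) P) : v.length < pnorm P := by
  obtain ⟨h1, h2⟩ := h
  have : ∃ a, parikh v a ≠ P a := by
    by_contra hc
    push_neg at hc
    exact h2 (funext hc)
  obtain ⟨a, ha⟩ := this
  have := pnorm_parikh v
  rw [← this]
  unfold pnorm
  exact Finset.sum_lt_sum (fun i _ => h1 i) ⟨a, Finset.mem_univ a, lt_of_le_of_ne (h1 a) ha⟩

lemma pssub_of_count_le {v : List α} (h : ∀ a, parikh v a ≤ P a)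
    (hl : v.length < pnorm P) : PSSub (parikh v) P := by
  refine ⟨h, fun hc => ?_⟩
  rw [length_of_parikh_eq hc] at hl
  omega

lemma pssub_nil (hP : 0 < pnorm P) : PSSub (parikh ([] : List α)) P :=
  pssub_of_count_le (fun a => by simp [parikh]) (by simpa using hP)

lemma blk_infix (w : List α) {x n y m : ℕ} (h1 : y ≤ x) (h2 : x + n ≤ y + m) :
    List.IsInfix (blk w x n) (blk w y m) := by
  have heq : blk w x n = ((blk w y m).drop (x - y)).take n := by
    simp only [blk, List.drop_take, List.drop_drop]
    rw [Nat.add_sub_cancel' h1]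
    rw [List.take_take]
    congr 1
    omega
  rw [heq]
  exact (List.take_prefix _ _).isInfix.trans (List.drop_suffix _ _).isInfix

lemma parikh_le_of_infix {u v : List α} (h : List.IsInfix u v) (a : α) :
    parikh u a ≤ parikh v a := h.sublist.count_le a

lemma pssub_sub_block {y x n : ℕ} (hbl : parikh (blk w y (pnorm P)) = P)
    (hyx : y ≤ x) (hxn : x + n ≤ y + pnorm P) (hn : n < pnorm P) :
    PSSub (parikh (blk w x n)) P := by
  refine pssub_of_count_le (fun a => ?_) ?_
  · calc parikh (blk w x n) a ≤ parikh (blk w y (pnorm P)) a :=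
          parikh_le_of_infix (blk_infix w hyx hxn) a
      _ = P a := by rw [hbl]
  · have := blk_length w x n
    omega

lemma pssub_sub_pssub {y x n m : ℕ} (hbl : PSSub (parikh (blk w y m)) P)
    (hyx : y ≤ x) (hxn : x + n ≤ y + m) :
    PSSub (parikh (blk w x n)) P := by
  have hin := blk_infix w hyx hxn
  refine pssub_of_count_le (fun a => le_trans (parikh_le_of_infix hin a) (hbl.1 a)) ?_
  calc (blk w x n).length = pnorm (parikh (blk w x n)) := (pnorm_parikh _).symm
    _ ≤ pnorm (parikh (blk w y m)) := Finset.sum_le_sum (fun a _ => parikh_le_of_infix hin a)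
    _ = (blk w y m).length := pnorm_parikh _
    _ < pnorm P := length_lt_of_pssub hbl

lemma not_pssub_of_block_le {x n : ℕ} (hbl : parikh (blk w x (pnorm P)) = P)
    (hn : pnorm P ≤ n) : ¬ PSSub (parikh (blk w x n)) P := by
  intro h
  apply h.2
  funext a
  refine le_antisymm (h.1 a) ?_
  calc P a = parikh (blk w x (pnorm P)) a := by rw [hbl]
    _ ≤ parikh (blk w x n) a := parikh_le_of_infix (blk_infix w le_rfl (by omega)) a

lemma mod_eq_cases {p a b : ℕ} (hp : 0 < p) (h : a % p = b % p) (h1 : a ≤ b)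
    (h2 : b < a + 2 * p) : b = a ∨ b = a + p := by
  have hd : p ∣ b - a := (Nat.modEq_iff_dvd' h1).mp h
  obtain ⟨q, hq⟩ := hd
  have hq2 : q < 2 := by
    by_contra hc
    push_neg at hc
    have : 2 * p ≤ p * q := by calc 2 * p = p * 2 := by ring
                                    _ ≤ p * q := Nat.mul_le_mul_left p hc
    omega
  interval_cases q <;> omega

lemma mod_eq_unique {p a b : ℕ} (hp : 0 < p) (h : a % p = b % p) (h1 : a ≤ b)
    (h2 : b < a + p) : a = b := by
  rcases mod_eq_cases hp h h1 (by omega) with h' | h' <;> omega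

end Helpers
section GridSec
set_option linter.unusedSectionVars false

lemma join_append' (a b : List (List α)) : (a ++ b).flatten = a.flatten ++ b.flatten := by simp

lemma join_cons' (x : List α) (a : List (List α)) : (x :: a).flatten = x ++ a.flatten := by simp

lemma join_blocks (w : List α) (x p c : ℕ) :
    ((List.range c).map (fun l => blk w (x + l * p) p)).flatten = blk w x (c * p) := by
  induction c with
  | zero => simp [blk]
  | succ c ih =>
    rw [List.range_succ, List.map_append, join_append', ih]
    simp only [List.map_cons, List.map_nil, join_cons', List.append_nil]
    have : (List.flatten [] : List α) = [] := rfl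
    rw [this, List.append_nil, blk_append]
    congr 1
    ring

lemma join_split (u : ℕ → List α) (m l : ℕ) (h : l ≤ m) :
    ((List.range (m + 1)).map u).flatten =
      ((List.range l).map u).flatten ++
        (u l ++ ((List.range (m - l)).map (fun t => u (l + 1 + t))).flatten) := by
  have h1 : m + 1 = l + (1 + (m - l)) := by omega
  rw [h1, List.range_add, List.map_append, join_append']
  congr 1
  rw [List.range_add, List.map_append, List.map_append, join_append', List.map_map,
    List.map_map, List.map_map]
  congr 1
  · have hr1 : List.range 1 = [0] := rfl
    rw [hr1]
    simp
  · congr 1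
    apply List.map_congr_left
    intro t _
    simp only [Function.comp_apply]
    congr 1
    omega

/-- explicit grid form of an anchored periodic fragment -/
def Grid (P : α → ℕ) (w : List α) (i j k : ℕ) : Prop :=
  ∃ s c, 2 ≤ c ∧ i ≤ s ∧ s % pnorm P = k % pnorm P ∧
    s + c * pnorm P ≤ j + 1 ∧ s + c * pnorm P ≤ w.length ∧
    PSSub (parikh (blk w i (s - i))) P ∧
    (∀ l < c, parikh (blk w (s + l * pnorm P) (pnorm P)) = P) ∧
    PSSub (parikh (blk w (s + c * pnorm P) (j + 1 - (s + c * pnorm P)))) P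

lemma grid_to_anch {P : α → ℕ} {w : List α} (hP : 0 < pnorm P) {i j k : ℕ}
    (h : Grid P w i j k) : PeriodicAnch P w i j k := by
  classical
  obtain ⟨s, c, hc, his, hmod, hj1, hwl, hhead, hblocks, htail⟩ := h
  set p := pnorm P with hp
  set u : ℕ → List α := fun l =>
    if l = 0 then blk w i (s - i)
    else if l ≤ c then blk w (s + (l - 1) * p) p
    else blk w (s + c * p) (j + 1 - (s + c * p)) with hu
  refine ⟨c + 1, u, by omega, ⟨by omega, ?_, ?_, ?_, ?_⟩, ?_⟩
  · -- join equality
    have hmap : (List.range (c + 2)).map u =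
        blk w i (s - i) :: ((List.range c).map (fun l => blk w (s + l * p) p) ++
          [blk w (s + c * p) (j + 1 - (s + c * p))]) := by
      have h2 : c + 2 = (c + 1) + 1 := rfl
      rw [h2, List.range_succ_eq_map, List.map_cons, List.map_map]
      have htl : List.map (u ∘ Nat.succ) (List.range (c + 1)) =
          (List.range c).map (fun l => blk w (s + l * p) p) ++
            [blk w (s + c * p) (j + 1 - (s + c * p))] := by
        rw [List.range_succ, List.map_append]
        congr 1
        · apply List.map_congr_left
          intro t ht
          simp only [List.mem_range] at ht
          simp only [Function.comp_apply, hu]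
          rw [if_neg (by omega), if_pos (by omega)]
          congr 2
          all_goals omega
        · simp only [List.map_cons, List.map_nil, Function.comp_apply, hu]
          rw [if_neg (by omega), if_neg (by omega)]
      rw [htl]
      have h0 : u 0 = blk w i (s - i) := by simp [hu]
      rw [h0]
    rw [hmap, join_cons', join_append']
    rw [join_blocks]
    have hsing : (List.flatten [blk w (s + c * p) (j + 1 - (s + c * p))]) =
        blk w (s + c * p) (j + 1 - (s + c * p)) := by simp
    rw [hsing]
    have hBC : blk w s (c * p) ++ blk w (s + c * p) (j + 1 - (s + c * p)) =
        blk w s (c * p + (j + 1 - (s + c * p))) := blk_append w s (c * p) _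
    have hAB : blk w i (s - i) ++ blk w s (c * p + (j + 1 - (s + c * p))) =
        blk w i ((s - i) + (c * p + (j + 1 - (s + c * p)))) := by
      have := blk_append w i (s - i) (c * p + (j + 1 - (s + c * p)))
      rwa [show i + (s - i) = s by omega] at this
    rw [hBC, hAB, frag_eq_blk]
    congr 1
    omega
  · -- cores
    intro l hl0 hlc
    have : u l = blk w (s + (l - 1) * p) p := by
      simp only [hu]
      rw [if_neg (by omega), if_pos (by omega)]
    rw [this]
    exact hblocks (l - 1) (by omega)
  · simpa [hu] using hhead
  · have : u (c + 1) = blk w (s + c * p) (j + 1 - (s + c * p)) := by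
      simp only [hu]
      rw [if_neg (by omega), if_neg (by omega)]
    rw [this]
    exact htail
  · -- anchor
    have hu0 : (u 0).length = s - i := by
      simp only [hu, if_pos rfl, blk_length]
      have hcp : p ≤ c * p := by
        calc p = 1 * p := (one_mul p).symm
          _ ≤ c * p := Nat.mul_le_mul_right p (by omega)
      omega
    rw [hu0, show i + (s - i) = s by omega]
    exact hmod

end GridSec
section GridSec2
set_option linter.unusedSectionVars false

lemma take_drop_blk (w : List α) (i n d l : ℕ) (h : d + l ≤ min n (w.length - i)) :
    (((w.drop i).take n).drop d).take l = blk w (i + d) l := by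
  rw [List.drop_take, List.drop_drop, List.take_take, blk]
  congr 1
  omega

lemma anch_to_grid {P : α → ℕ} {w : List α} (hP : 0 < pnorm P) {i j k : ℕ}
    (h : PeriodicAnch P w i j k) : Grid P w i j k := by
  obtain ⟨m, u, hm3, ⟨hm1, hjoin, hcores, hhead, htail⟩, hanch⟩ := h
  set p := pnorm P with hp
  set off : ℕ → ℕ := fun l => (((List.range l).map u).flatten).length with hoff
  have hoff0 : off 0 = 0 := rfl
  have hsplit : ∀ l ≤ m, frag w i j = ((List.range l).map u).flatten ++
      (u l ++ ((List.range (m - l)).map (fun t => u (l + 1 + t))).flatten) := by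
    intro l hl
    rw [hjoin]
    exact join_split u m l hl
  have hjnlen : (frag w i j).length = min (j + 1 - i) (w.length - i) := by
    simp [frag]
  have hofflen : ∀ l ≤ m, off l + (u l).length ≤ (frag w i j).length := by
    intro l hl
    rw [hsplit l hl, List.length_append, List.length_append]
    have h0 : off l = ((List.range l).map u).flatten.length := rfl
    omega
  have hpiece : ∀ l ≤ m, u l = blk w (i + off l) (u l).length := by
    intro l hl
    have h1 : (frag w i j).drop (off l) =
        u l ++ ((List.range (m - l)).map (fun t => u (l + 1 + t))).flatten := by
      conv_lhs => rw [hsplit l hl]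
      exact List.drop_left
    have h2 : u l = ((frag w i j).drop (off l)).take (u l).length := by
      rw [h1]
      exact List.take_left.symm
    have h3 : (((w.drop i).take (j + 1 - i)).drop (off l)).take (u l).length =
        blk w (i + off l) (u l).length := by
      apply take_drop_blk
      have := hofflen l hl
      rw [hjnlen] at this
      omega
    rw [← h3]
    exact h2
  have hoffsucc : ∀ l, off (l + 1) = off l + (u l).length := by
    intro l
    simp only [hoff]
    rw [List.range_succ, List.map_append, join_append', List.length_append]
    simp
  have hclen : ∀ l, 0 < l → l < m → (u l).length = p := fun l h1 h2 =>
    length_of_parikh_eq (hcores l h1 h2)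
  have hoffval : ∀ l, 1 ≤ l → l ≤ m → off l = (u 0).length + (l - 1) * p := by
    intro l
    induction l with
    | zero => omega
    | succ n ih =>
      intro _ hle
      rcases Nat.eq_zero_or_pos n with hn | hn
      · subst hn
        rw [hoffsucc 0, hoff0]
        simp
      · rw [hoffsucc n, ih (by omega) (by omega), hclen n hn (by omega)]
        have hnn : (n + 1 - 1) = (n - 1) + 1 := by omega
        rw [hnn, Nat.succ_mul]
        omega
  set s := i + (u 0).length with hs
  set c := m - 1 with hc
  have hcm : m = c + 1 := by omega
  have hoffm : off m = (u 0).length + c * p := by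
    rw [hoffval m (by omega) le_rfl]
  have hlenm : (frag w i j).length = off m + (u m).length := by
    conv_lhs => rw [hsplit m le_rfl]
    rw [List.length_append, List.length_append]
    have h0 : ((List.range (m - m)).map (fun t => u (m + 1 + t))).flatten.length = 0 := by
      simp [Nat.sub_self]
    have h1 : off m = ((List.range m).map u).flatten.length := rfl
    omega
  have hcp1 : p ≤ c * p := by
    calc p = 1 * p := (one_mul p).symm
      _ ≤ c * p := Nat.mul_le_mul_right p (by omega)
  have hcp2 : 2 * p ≤ c * p := Nat.mul_le_mul_right p (by omega)
  have hoffm_le : off m + (u m).length ≤ (frag w i j).length := hofflen m le_rfl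
  have hscp_j : s + c * p ≤ j + 1 := by
    rw [hjnlen] at hoffm_le
    omega
  have hscp_w : s + c * p ≤ w.length := by
    rw [hjnlen] at hoffm_le
    omega
  refine ⟨s, c, by omega, by omega, hanch, hscp_j, hscp_w, ?_, ?_, ?_⟩
  · -- head
    have h1 : s - i = (u 0).length := by omega
    rw [h1]
    have h2 := hpiece 0 (by omega)
    rw [hoff0, Nat.add_zero] at h2
    rw [← h2]
    exact hhead
  · -- blocks
    intro l hl
    have hl1 : l + 1 ≤ m := by omega
    have h2 := hpiece (l + 1) hl1
    have hlen : (u (l + 1)).length = p := hclen (l + 1) (by omega) (by omega)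
    have hoffl : off (l + 1) = (u 0).length + l * p := by
      rw [hoffval (l + 1) (by omega) hl1]
      simp
    rw [hoffl, hlen] at h2
    have h3 : blk w (s + l * p) p = u (l + 1) := by
      rw [h2]
      congr 1
      omega
    rw [h3]
    exact hcores (l + 1) (by omega) (by omega)
  · -- tail
    have h2 := hpiece m le_rfl
    rw [hoffm] at h2
    have h4 : i + ((u 0).length + c * p) = s + c * p := by omega
    rw [h4] at h2
    have h5 : blk w (s + c * p) (j + 1 - (s + c * p)) = u m := by
      by_cases hcase : j + 1 - i ≤ w.length - i
      · have hl1 : (frag w i j).length = j + 1 - i := by rw [hjnlen]; omega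
        have heq : j + 1 - (s + c * p) = (u m).length := by omega
        rw [heq, ← h2]
      · have hwl : w.length - (s + c * p) ≤ j + 1 - (s + c * p) := by
          rw [hjnlen] at hlenm
          omega
        have hum : (u m).length = w.length - (s + c * p) := by
          rw [hjnlen] at hlenm
          omega
        have hd1 : blk w (s + c * p) (j + 1 - (s + c * p)) = w.drop (s + c * p) := by
          apply List.take_of_length_le
          simp only [List.length_drop]
          omega
        have hd2 : u m = w.drop (s + c * p) := by
          rw [h2]
          apply List.take_of_length_le
          simp only [List.length_drop]
          omega
        rw [hd1, hd2]
    rw [h5]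
    exact htail

lemma anch_iff_grid {P : α → ℕ} {w : List α} (hP : 0 < pnorm P) (i j k : ℕ) :
    PeriodicAnch P w i j k ↔ Grid P w i j k :=
  ⟨anch_to_grid hP, grid_to_anch hP⟩

end GridSec2
section Part2
set_option linter.unusedSectionVars false

lemma grid_head_bound {P : α → ℕ} {w : List α} {i s : ℕ}
    (hsw : s ≤ w.length) (his : i ≤ s)
    (hhead : PSSub (parikh (blk w i (s - i))) P) : s - i < pnorm P := by
  have h1 := length_lt_of_pssub hhead
  rw [blk_length] at h1
  omega

lemma grid_tail_bound {P : α → ℕ} {w : List α} {x j : ℕ}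
    (hjw : j + 1 ≤ w.length) (hx : x ≤ j + 1)
    (htail : PSSub (parikh (blk w x (j + 1 - x))) P) : j + 1 - x < pnorm P := by
  have h1 := length_lt_of_pssub htail
  rw [blk_length] at h1
  omega

lemma part2 (P : α → ℕ) (w : List α) (hP : 0 < pnorm P) :
    ∀ b e k, AnchoredRun P w b e k →
      ∃! ij : ℕ × ℕ, MaxPower P w ij.1 ij.2 ∧
        b ≤ ij.1 ∧ ij.2 ≤ e ∧ ij.1 - b < pnorm P ∧ e - ij.2 < pnorm P ∧
        ij.1 % pnorm P = k % pnorm P := by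
  intro b e k hrun
  obtain ⟨hbe, hew, hPA, hlmax, hrmax⟩ := hrun
  obtain ⟨s, c, hc2, hbs, hmod, hsce, hscw, hhead, hblocks, htail⟩ := anch_to_grid hP hPA
  have hsb : s - b < (pnorm P) := grid_head_bound (by omega) hbs hhead
  have hte : e + 1 - (s + c * (pnorm P)) < (pnorm P) := grid_tail_bound (by omega) (by omega) htail
  have hcp1 : (pnorm P) ≤ c * (pnorm P) := by
    calc (pnorm P) = 1 * (pnorm P) := (one_mul (pnorm P)).symm
      _ ≤ c * (pnorm P) := Nat.mul_le_mul_right (pnorm P) (by omega)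
  have hcp2 : 2 * (pnorm P) ≤ c * (pnorm P) := Nat.mul_le_mul_right (pnorm P) (by omega)
  refine ⟨(s, s + c * (pnorm P) - 1), ⟨?_, by simp; omega, by simp; omega, by simp; omega,
    by simp; omega, by simpa using hmod⟩, ?_⟩
  · -- MaxPower
    have hj1 : s + c * (pnorm P) - 1 + 1 = s + c * (pnorm P) := by omega
    refine ⟨by omega, ⟨c, hc2, by omega⟩, ?_, ?_, ?_⟩
    · -- blocks
      intro l hl
      rw [hj1] at hl
      have hlc : l < c := by
        by_contra hcon
        push_neg at hcon
        have : (c + 1) * (pnorm P) ≤ (l + 1) * (pnorm P) := Nat.mul_le_mul_right (pnorm P) (by omega)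
        have h2 : (c + 1) * (pnorm P) = c * (pnorm P) + (pnorm P) := by rw [Nat.succ_mul]
        omega
      have hsm : (l + 1) * (pnorm P) = l * (pnorm P) + (pnorm P) := by rw [Nat.succ_mul]
      have hfr : frag w (s + l * (pnorm P)) (s + (l + 1) * (pnorm P) - 1) = blk w (s + l * (pnorm P)) (pnorm P) := by
        rw [frag_eq_blk]
        congr 1
        omega
      rw [hfr]
      exact hblocks l hlc
    · -- left maximality
      by_cases hsp : s < (pnorm P)
      · exact Or.inl hsp
      · right
        intro heq
        have hfr : frag w (s - (pnorm P)) (s - 1) = blk w (s - (pnorm P)) (pnorm P) := by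
          rw [frag_eq_blk]
          congr 1
          omega
        rw [hfr] at heq
        have hb1 : 1 ≤ b := by omega
        have hnPA := hlmax.resolve_left (by omega)
        apply hnPA
        apply grid_to_anch hP
        have hspb : s - (pnorm P) ≤ b - 1 := by omega
        by_cases hbs1 : b - 1 ≤ s - (pnorm P)
        · -- b - 1 = s - (pnorm P) : empty head, c+1 cores
          have hbsp : b - 1 = s - (pnorm P) := by omega
          refine ⟨s - (pnorm P), c + 1, by omega, by omega, ?_, ?_, ?_, ?_, ?_, ?_⟩
          · have h1 : s = (s - (pnorm P)) + (pnorm P) := by omega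
            conv_rhs => rw [← hmod, h1, Nat.add_mod_right]
          · have h2 : (c + 1) * (pnorm P) = c * (pnorm P) + (pnorm P) := by rw [Nat.succ_mul]
            omega
          · have h2 : (c + 1) * (pnorm P) = c * (pnorm P) + (pnorm P) := by rw [Nat.succ_mul]
            omega
          · rw [show s - (pnorm P) - (b - 1) = 0 by omega, blk_zero]
            exact pssub_nil hP
          · intro l hl
            rcases Nat.eq_zero_or_pos l with hl0 | hl0
            · subst hl0
              rw [show s - (pnorm P) + 0 * (pnorm P) = s - (pnorm P) by omega]
              exact heq
            · have harg : s - (pnorm P) + l * (pnorm P) = s + (l - 1) * (pnorm P) := by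
                have h4 : l = (l - 1) + 1 := by omega
                have h3 : l * (pnorm P) = (l - 1) * (pnorm P) + (pnorm P) := by
                  conv_lhs => rw [h4, Nat.succ_mul]
                omega
              rw [harg]
              exact hblocks (l - 1) (by omega)
          · have harg : s - (pnorm P) + (c + 1) * (pnorm P) = s + c * (pnorm P) := by
              have h3 : (c + 1) * (pnorm P) = c * (pnorm P) + (pnorm P) := by rw [Nat.succ_mul]
              omega
            rw [harg]
            exact htail
        · -- s - (pnorm P) < b - 1 : head inside block
          refine ⟨s, c, hc2, by omega, hmod, by omega, hscw, ?_, hblocks, htail⟩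
          exact pssub_sub_block heq (by omega) (by omega) (by omega)
    · -- right maximality
      by_cases hwl : w.length ≤ s + c * (pnorm P) - 1 + (pnorm P)
      · exact Or.inl (by omega)
      · right
        intro heq
        rw [hj1] at heq
        have hfr : frag w (s + c * (pnorm P)) (s + c * (pnorm P) - 1 + (pnorm P)) = blk w (s + c * (pnorm P)) (pnorm P) := by
          rw [frag_eq_blk]
          congr 1
          omega
        rw [hfr] at heq
        have hnPA := hrmax.resolve_left (by omega)
        apply hnPA
        apply grid_to_anch hP
        by_cases hcase : e + 2 = s + c * (pnorm P) + (pnorm P)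
        · -- extend with a full core
          refine ⟨s, c + 1, by omega, by omega, hmod, ?_, ?_, hhead, ?_, ?_⟩
          · have h2 : (c + 1) * (pnorm P) = c * (pnorm P) + (pnorm P) := by rw [Nat.succ_mul]
            omega
          · have h2 : (c + 1) * (pnorm P) = c * (pnorm P) + (pnorm P) := by rw [Nat.succ_mul]
            omega
          · intro l hl
            rcases Nat.lt_or_ge l c with hlc | hlc
            · exact hblocks l hlc
            · have hlc' : l = c := by omega
              subst hlc'
              exact heq
          · have h2 : (c + 1) * (pnorm P) = c * (pnorm P) + (pnorm P) := by rw [Nat.succ_mul]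
            rw [show e + 1 + 1 - (s + (c + 1) * (pnorm P)) = 0 by omega, blk_zero]
            exact pssub_nil hP
        · -- extend tail by one letter
          refine ⟨s, c, hc2, by omega, hmod, by omega, hscw, hhead, hblocks, ?_⟩
          exact pssub_sub_block heq le_rfl (by omega) (by omega)
  · -- uniqueness
    rintro ⟨i', j'⟩ ⟨hMP', hbi', hj'e, hi'b, hej', hmod'⟩
    simp only at hMP' hbi' hj'e hi'b hej' hmod'
    obtain ⟨hj'w, ⟨m', hm2', hjm'⟩, hblocks', hleft', hright'⟩ := hMP'
    have hi's : i' = s := by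
      have hmm : i' % (pnorm P) = s % (pnorm P) := by rw [hmod', hmod]
      rcases le_or_gt i' s with h1 | h1
      · exact (mod_eq_unique hP hmm h1 (by omega)).symm ▸ rfl
      · exact (mod_eq_unique hP hmm.symm (le_of_lt h1) (by omega)).symm ▸ rfl
    have h1 : (j' + 1) % pnorm P = (s + c * pnorm P) % pnorm P := by
      rw [hi's] at hjm'
      rw [hjm', Nat.add_mul_mod_self_right, Nat.add_mul_mod_self_right]
    have h2 : j' + 1 = s + c * pnorm P := by
      rcases le_or_gt (j' + 1) (s + c * pnorm P) with hle | hlt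
      · exact mod_eq_unique hP h1 hle (by omega)
      · exact (mod_eq_unique hP h1.symm (le_of_lt hlt) (by omega)).symm
    simp only [Prod.mk.injEq]
    exact ⟨hi's, by omega⟩

end Part2
section Part1
set_option linter.unusedSectionVars false

lemma part1 (P : α → ℕ) (w : List α) (hP : 0 < pnorm P) :
    ∀ i j, MaxPower P w i j →
      ∃! be : ℕ × ℕ, AnchoredRun P w be.1 be.2 i ∧
        be.1 ≤ i ∧ j ≤ be.2 ∧ i - be.1 < pnorm P ∧ be.2 - j < pnorm P := by
  classical
  intro i j hMP
  obtain ⟨hjw, ⟨m, hm2, hjm⟩, hblockfrag, hleft, hright⟩ := hMP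
  have hmp2 : 2 * pnorm P ≤ m * pnorm P := Nat.mul_le_mul_right _ hm2
  have hblk : ∀ l < m, parikh (blk w (i + l * pnorm P) (pnorm P)) = P := by
    intro l hl
    have hsm : (l + 1) * pnorm P = l * pnorm P + pnorm P := Nat.succ_mul l _
    have hmono : (l + 1) * pnorm P ≤ m * pnorm P := Nat.mul_le_mul_right _ (by omega)
    have h1 := hblockfrag l (by omega)
    rw [frag_eq_blk] at h1
    have h2 : blk w (i + l * pnorm P) (pnorm P) =
        blk w (i + l * pnorm P) (i + (l + 1) * pnorm P - 1 + 1 - (i + l * pnorm P)) := by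
      congr 1
      omega
    rw [h2]
    exact h1
  set Hp : ℕ → Prop := fun h => h ≤ i ∧ PSSub (parikh (blk w (i - h) h)) P with hHpdef
  set Tp : ℕ → Prop := fun t => j + t < w.length ∧ PSSub (parikh (blk w (j + 1) t)) P with hTpdef
  set H := Nat.findGreatest Hp (pnorm P - 1) with hHdef
  set T := Nat.findGreatest Tp (pnorm P - 1) with hTdef
  have hHle : H ≤ pnorm P - 1 := Nat.findGreatest_le _
  have hTle : T ≤ pnorm P - 1 := Nat.findGreatest_le _
  have hHspec : H ≤ i ∧ PSSub (parikh (blk w (i - H) H)) P := by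
    rcases Nat.eq_zero_or_pos H with h0 | h0
    · rw [h0]
      exact ⟨Nat.zero_le i, by rw [blk_zero]; exact pssub_nil hP⟩
    · exact Nat.findGreatest_of_ne_zero hHdef.symm (by omega)
  have hTspec : j + T < w.length ∨ T = 0 := by
    rcases Nat.eq_zero_or_pos T with h0 | h0
    · exact Or.inr h0
    · exact Or.inl (Nat.findGreatest_of_ne_zero hTdef.symm (by omega)).1
  have hTspec2 : PSSub (parikh (blk w (j + 1) T)) P := by
    rcases Nat.eq_zero_or_pos T with h0 | h0
    · rw [h0, blk_zero]
      exact pssub_nil hP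
    · exact (Nat.findGreatest_of_ne_zero hTdef.symm (by omega)).2
  set b := i - H with hbdef
  set e := j + T with hedef
  have hbH : i - b = H := by omega
  have hij : i ≤ j := by omega
  have hew : e < w.length := by
    rcases hTspec with h | h
    · omega
    · omega
  have hheadb : PSSub (parikh (blk w b (i - b))) P := by
    have h1 : blk w b (i - b) = blk w (i - H) H := by rw [hbH]
    rw [h1]
    exact hHspec.2
  have hgrid : Grid P w b e i := by
    refine ⟨i, m, hm2, by omega, rfl, by omega, by omega, hheadb, hblk, ?_⟩
    have h1 : blk w (i + m * pnorm P) (e + 1 - (i + m * pnorm P)) = blk w (j + 1) T := by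
      congr 1 <;> omega
    rw [h1]
    exact hTspec2
  have hrun : AnchoredRun P w b e i := by
    refine ⟨by omega, hew, grid_to_anch hP hgrid, ?_, ?_⟩
    · -- left maximality
      by_cases hb0 : b = 0
      · exact Or.inl hb0
      right
      intro hPA'
      obtain ⟨s', c', hc2', hbs', hmod', hsce', hscw', hhead', hblocks', htail'⟩ :=
        anch_to_grid hP hPA'
      have hs'b : s' - (b - 1) < pnorm P := grid_head_bound (by omega) hbs' hhead'
      have hcp' : pnorm P ≤ c' * pnorm P := by
        calc pnorm P = 1 * pnorm P := (one_mul _).symm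
          _ ≤ c' * pnorm P := Nat.mul_le_mul_right _ (by omega)
      have hsi : s' = i ∨ (pnorm P ≤ i ∧ s' = i - pnorm P) := by
        rcases le_or_gt s' i with h1 | h1
        · rcases mod_eq_cases hP hmod' h1 (by omega) with h2 | h2
          · left; omega
          · right; omega
        · rcases mod_eq_cases hP hmod'.symm (le_of_lt h1) (by omega) with h2 | h2
          · left; omega
          · exfalso; omega
      rcases hsi with hsi | ⟨hip, hsi⟩
      · -- s' = i : contradict maximality of H
        have hsymm : i = s' := hsi.symm
        subst hsymm
        refine Nat.findGreatest_is_greatest (P := Hp) (n := pnorm P - 1) (k := H + 1)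
          (by rw [← hHdef]; omega) (by omega) ?_
        rw [hHpdef]
        refine ⟨by omega, ?_⟩
        have h1 : blk w (i - (H + 1)) (H + 1) = blk w (b - 1) (i - (b - 1)) := by
          congr 1 <;> omega
        rw [h1]
        exact hhead'
      · -- s' = i - p : full block before i, contradict MaxPower left
        have hbl0 := hblocks' 0 (by omega)
        rw [show s' + 0 * pnorm P = s' from by omega] at hbl0
        rcases hleft with h | h
        · omega
        · apply h
          have h1 : frag w (i - pnorm P) (i - 1) = blk w s' (pnorm P) := by
            rw [frag_eq_blk]
            congr 1 <;> omega
          rw [h1]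
          exact hbl0
    · -- right maximality
      by_cases hew1 : e + 1 = w.length
      · exact Or.inl hew1
      right
      intro hPA'
      obtain ⟨s', c', hc2', hbs', hmod', hsce', hscw', hhead', hblocks', htail'⟩ :=
        anch_to_grid hP hPA'
      have hs'b : s' - b < pnorm P := grid_head_bound (by omega) hbs' hhead'
      have hsi : i = s' := by
        rcases le_or_gt s' i with h1 | h1
        · exact (mod_eq_unique hP hmod' h1 (by omega)).symm
        · exact mod_eq_unique hP hmod'.symm (le_of_lt h1) (by omega)
      subst hsi
      rcases lt_trichotomy c' m with hcm | hcm | hcm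
      · -- c' < m : tail contains a full block
        have hbl := hblk c' (by omega)
        have hmono : (c' + 1) * pnorm P ≤ m * pnorm P := Nat.mul_le_mul_right _ (by omega)
        have hsm : (c' + 1) * pnorm P = c' * pnorm P + pnorm P := Nat.succ_mul _ _
        exact not_pssub_of_block_le hbl (by omega) htail'
      · -- c' = m : contradict maximality of T
        subst hcm
        have h1 : blk w (i + c' * pnorm P) (e + 1 + 1 - (i + c' * pnorm P)) =
            blk w (j + 1) (T + 1) := by
          congr 1 <;> omega
        rw [h1] at htail'
        have hlen := length_lt_of_pssub htail'
        rw [blk_length] at hlen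
        have hT1 : T + 1 < pnorm P := by omega
        refine Nat.findGreatest_is_greatest (P := Tp) (n := pnorm P - 1) (k := T + 1)
          (by rw [← hTdef]; omega) (by omega) ?_
        rw [hTpdef]
        exact ⟨by omega, htail'⟩
      · -- m < c' : full block after j, contradict MaxPower right
        have hbl := hblocks' m (by omega)
        have hmono : (m + 1) * pnorm P ≤ c' * pnorm P := Nat.mul_le_mul_right _ (by omega)
        have hsm : (m + 1) * pnorm P = m * pnorm P + pnorm P := Nat.succ_mul _ _
        rcases hright with h | h
        · omega
        · apply h
          have h1 : frag w (j + 1) (j + pnorm P) = blk w (i + m * pnorm P) (pnorm P) := by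
            rw [frag_eq_blk]
            congr 1 <;> omega
          rw [h1]
          exact hbl
  refine ⟨(b, e), ⟨hrun, by simp; omega, by simp; omega, by simp; omega, by simp; omega⟩, ?_⟩
  -- uniqueness
  rintro ⟨b', e'⟩ ⟨hrun', hb'i, hje', hib', hej'⟩
  simp only at hrun' hb'i hje' hib' hej'
  obtain ⟨hbe'', he'w, hPA'', hlmax'', hrmax''⟩ := hrun'
  obtain ⟨s', c', hc2', hbs', hmod', hsce', hscw', hhead', hblocks', htail'⟩ :=
    anch_to_grid hP hPA''
  have hs'b : s' - b' < pnorm P := grid_head_bound (by omega) hbs' hhead'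
  have hsi : i = s' := by
    rcases le_or_gt s' i with h1 | h1
    · exact (mod_eq_unique hP hmod' h1 (by omega)).symm
    · exact mod_eq_unique hP hmod'.symm (le_of_lt h1) (by omega)
  subst hsi
  have hcm : c' = m := by
    rcases lt_trichotomy c' m with hcm | hcm | hcm
    · exfalso
      have hbl := hblk c' (by omega)
      have hmono : (c' + 1) * pnorm P ≤ m * pnorm P := Nat.mul_le_mul_right _ (by omega)
      have hsm : (c' + 1) * pnorm P = c' * pnorm P + pnorm P := Nat.succ_mul _ _
      exact not_pssub_of_block_le hbl (by omega) htail'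
    · exact hcm
    · exfalso
      have hbl := hblocks' m (by omega)
      have hmono : (m + 1) * pnorm P ≤ c' * pnorm P := Nat.mul_le_mul_right _ (by omega)
      have hsm : (m + 1) * pnorm P = m * pnorm P + pnorm P := Nat.succ_mul _ _
      rcases hright with h | h
      · omega
      · apply h
        have h1 : frag w (j + 1) (j + pnorm P) = blk w (i + m * pnorm P) (pnorm P) := by
          rw [frag_eq_blk]
          congr 1 <;> omega
        rw [h1]
        exact hbl
  subst hcm
  have htail'' : PSSub (parikh (blk w (j + 1) (e' - j))) P := by
    have h1 : blk w (j + 1) (e' - j) = blk w (i + c' * pnorm P) (e' + 1 - (i + c' * pnorm P)) := by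
      congr 1 <;> omega
    rw [h1]
    exact htail'
  have hTbound : e' - j < pnorm P := by
    have hlen := length_lt_of_pssub htail''
    rw [blk_length] at hlen
    omega
  have hTge : e' - j ≤ T := by
    rw [hTdef]
    apply Nat.le_findGreatest (by omega)
    rw [hTpdef]
    exact ⟨by omega, htail''⟩
  have hHge : i - b' ≤ H := by
    rw [hHdef]
    apply Nat.le_findGreatest (by omega)
    rw [hHpdef]
    refine ⟨by omega, ?_⟩
    have h1 : blk w (i - (i - b')) (i - b') = blk w b' (i - b') := by
      congr 1
      omega
    rw [h1]
    exact hhead'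
  have hbb' : b ≤ b' := by omega
  have hb'b : b' ≤ b := by
    by_contra hcon
    push_neg at hcon
    have hb'1 : 1 ≤ b' := by omega
    have hnPA := hlmax''.resolve_left (by omega)
    apply hnPA
    apply grid_to_anch hP
    refine ⟨i, c', hc2', by omega, rfl, by omega, hscw', ?_, hblocks', htail'⟩
    exact pssub_sub_pssub hheadb (by omega) (by omega)
  have hee' : e' ≤ e := by omega
  have he'e : e ≤ e' := by
    by_contra hcon
    push_neg at hcon
    have hT1 : 1 ≤ T := by omega
    have hTw : j + T < w.length := by
      rcases hTspec with h | h
      · exact h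
      · omega
    have hnPA := hrmax''.resolve_left (by omega)
    apply hnPA
    apply grid_to_anch hP
    refine ⟨i, c', hc2', by omega, rfl, by omega, by omega, hhead', hblocks', ?_⟩
    have h1 : blk w (i + c' * pnorm P) (e' + 1 + 1 - (i + c' * pnorm P)) =
        blk w (j + 1) (e' + 1 - j) := by
      congr 1 <;> omega
    rw [h1]
    exact pssub_sub_pssub hTspec2 le_rfl (by omega)
  simp only [Prod.mk.injEq]
  omega

end Part1

/-- The one-to-one correspondence between maximal abelian powers of period P and
anchored runs with period P: every maximal power extends to a unique anchored
run (anchored at its starting position) by adding a head and tail of length < p,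
and trimming the head and tail of an anchored run yields a unique maximal power. -/
theorem maxPower_anchoredRun_bijection (P : α → ℕ) (w : List α)
    (hP : 0 < pnorm P) :
    (∀ i j, MaxPower P w i j →
      ∃! be : ℕ × ℕ, AnchoredRun P w be.1 be.2 i ∧
        be.1 ≤ i ∧ j ≤ be.2 ∧ i - be.1 < pnorm P ∧ be.2 - j < pnorm P) ∧
    (∀ b e k, AnchoredRun P w b e k →
      ∃! ij : ℕ × ℕ, MaxPower P w ij.1 ij.2 ∧
        b ≤ ij.1 ∧ ij.2 ≤ e ∧ ij.1 - b < pnorm P ∧ e - ij.2 < pnorm P ∧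
        ij.1 % pnorm P = k % pnorm P) :=
  ⟨part1 P w hP, part2 P w hP⟩
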